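/- Let M₁ and M₂ be countably compact normal manifolds (first countable, Tychonoff). Then dim(M₁ × M₂) ≤ dim M₁ + dim M₂. -/

import Mathlib

open Set Topology

universe u v w

/-- An abstract simplicial complex on a vertex set `V`. -/
structure SimpComplex (V : Type v) where
  faces : Set (Finset V)
  down_closed : ∀ s ∈ faces, ∀ t, t ⊆ s → t.Nonempty → t ∈ faces

/-- The geometric realization of a simplicial complex with the metric (ℓ¹) topology,
realized inside the Banach space `ℓ¹(V)`. -/
def SimpComplex.space {V : Type v} (K : SimpComplex V) : Set (lp (fun _ : V => ℝ) 1) :=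
  {f | ∃ s ∈ K.faces, (∀ v : V, (f : ∀ _ : V, ℝ) v ≠ 0 → v ∈ s) ∧
    (∀ v : V, 0 ≤ (f : ∀ _ : V, ℝ) v) ∧ ∑ v ∈ s, (f : ∀ _ : V, ℝ) v = 1}

/-- `Z` is an absolute extensor of `X`: every continuous map from a closed subset of `X`
into `Z` extends continuously over all of `X`. -/
def IsAE (Z X : Type*) [TopologicalSpace Z] [TopologicalSpace X] : Prop :=
  ∀ Y : Set X, IsClosed Y → ∀ f : C(Y, Z), ∃ g : C(X, Z), ∀ y : Y, g y = f y

/-- `Z` is an absolute neighborhood extensor of `X`. -/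
def IsANE (Z X : Type*) [TopologicalSpace Z] [TopologicalSpace X] : Prop :=
  ∀ Y : Set X, IsClosed Y → ∀ f : C(Y, Z),
    ∃ U : Set X, IsOpen U ∧ Y ⊆ U ∧ ∃ g : C(U, Z),
      ∀ (y : Y) (h : (y : X) ∈ U), g ⟨y, h⟩ = f y

/-- A space is countably compact if every countable open cover has a finite subcover. -/
def CountablyCompact (X : Type*) [TopologicalSpace X] : Prop :=
  ∀ 𝒰 : ℕ → Set X, (∀ n, IsOpen (𝒰 n)) → (⋃ n, 𝒰 n) = univ →
    ∃ t : Finset ℕ, (⋃ n ∈ t, 𝒰 n) = univ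

/-- A set is functionally open if it is the cozero set of a real-valued continuous function. -/
def FunctionallyOpen {X : Type*} [TopologicalSpace X] (U : Set X) : Prop :=
  ∃ φ : C(X, ℝ), U = φ ⁻¹' ({0}ᶜ)

/-- `CovDimLE X n` : every finite functionally open cover of `X` has a finite functionally
open refinement of order at most `n + 1` (any `n + 2` distinct members meet emptily). -/
def CovDimLE (X : Type*) [TopologicalSpace X] (n : ℕ) : Prop :=
  ∀ 𝒰 : Finset (Set X), (∀ U ∈ 𝒰, FunctionallyOpen U) → ⋃₀ (𝒰 : Set (Set X)) = univ →
    ∃ 𝒱 : Finset (Set X), (∀ V ∈ 𝒱, FunctionallyOpen V) ∧ ⋃₀ (𝒱 : Set (Set X)) = univ ∧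
      (∀ V ∈ 𝒱, ∃ U ∈ 𝒰, V ⊆ U) ∧
      ∀ 𝒲 : Finset (Set X), 𝒲 ⊆ 𝒱 → n + 1 < 𝒲.card → ⋂₀ (𝒲 : Set (Set X)) = ∅

/-- The covering dimension of `X` as an extended natural number (`⊤` if no finite bound). -/
noncomputable def covDim (X : Type*) [TopologicalSpace X] : ℕ∞ :=
  sInf ((↑) '' {n : ℕ | CovDimLE X n})

/-- The Stone–Čech remainder `βX \ X`. -/
def StoneCechRemainder (X : Type*) [TopologicalSpace X] : Set (StoneCech X) :=
  (range (stoneCechUnit : X → StoneCech X))ᶜ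

/-- `M` is an `n`-manifold: every point has an open neighborhood homeomorphic to `ℝⁿ`. -/
def IsTopManifold (M : Type*) [TopologicalSpace M] (n : ℕ) : Prop :=
  ∀ x : M, ∃ U : Set M, IsOpen U ∧ x ∈ U ∧ Nonempty (↥U ≃ₜ EuclideanSpace ℝ (Fin n))


namespace CovDimProof

open Filter

universe uz

variable {X Y : Type*} [TopologicalSpace X] [TopologicalSpace Y]

/-- Sequential compactness. -/
def SeqCpt (X : Type*) [TopologicalSpace X] : Prop :=
  ∀ u : ℕ → X, ∃ (x : X) (φ : ℕ → ℕ), StrictMono φ ∧ Tendsto (u ∘ φ) atTop (𝓝 x)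


open Filter



theorem fo_pos (h : C(X, ℝ)) : FunctionallyOpen {x | 0 < h x} := by
  refine ⟨(h ⊔ 0 : C(X, ℝ)), ?_⟩
  ext x
  simp only [mem_setOf_eq, mem_preimage, mem_compl_iff, mem_singleton_iff,
    ContinuousMap.sup_apply, ContinuousMap.zero_apply, sup_eq_right.not]
  constructor
  · intro hx; exact not_le.mpr hx
  · exact fun hx => not_le.mp hx

theorem fo_congr {U V : Set X} (h : FunctionallyOpen U) (e : U = V) : FunctionallyOpen V := e ▸ h

theorem fo_iff_pos {U : Set X} :
    FunctionallyOpen U ↔ ∃ h : C(X, ℝ), U = {x | 0 < h x} := by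
  constructor
  · rintro ⟨φ, rfl⟩
    refine ⟨(φ * φ : C(X, ℝ)), ?_⟩
    ext x
    simp only [mem_preimage, mem_compl_iff, mem_singleton_iff, mem_setOf_eq,
      ContinuousMap.mul_apply, mul_self_pos]
  · rintro ⟨h, rfl⟩; exact fo_pos h

theorem fo_univ : FunctionallyOpen (univ : Set X) := by
  refine fo_iff_pos.mpr ⟨ContinuousMap.const X 1, ?_⟩
  ext x; simp

theorem fo_empty : FunctionallyOpen (∅ : Set X) := by
  refine fo_iff_pos.mpr ⟨ContinuousMap.const X 0, ?_⟩
  ext x; simp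

theorem fo_inter {U V : Set X} (hU : FunctionallyOpen U) (hV : FunctionallyOpen V) :
    FunctionallyOpen (U ∩ V) := by
  rcases fo_iff_pos.mp hU with ⟨f, rfl⟩
  rcases fo_iff_pos.mp hV with ⟨g, rfl⟩
  refine fo_iff_pos.mpr ⟨f ⊓ g, ?_⟩
  ext x
  simp only [mem_inter_iff, mem_setOf_eq, ContinuousMap.inf_apply, lt_inf_iff]

theorem fo_biInter {ι : Type*} (s : Finset ι) (U : ι → Set X)
    (h : ∀ i ∈ s, FunctionallyOpen (U i)) : FunctionallyOpen (⋂ i ∈ s, U i) := by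
  classical
  induction s using Finset.induction with
  | empty => simpa using fo_univ
  | insert a s hni ih =>
    rw [Finset.set_biInter_insert]
    exact fo_inter (h a (Finset.mem_insert_self a s))
      (ih fun i hi => h i (Finset.mem_insert_of_mem hi))

theorem fo_prod {U : Set X} {V : Set Y} (hU : FunctionallyOpen U) (hV : FunctionallyOpen V) :
    FunctionallyOpen (U ×ˢ V) := by
  rcases fo_iff_pos.mp hU with ⟨f, rfl⟩
  rcases fo_iff_pos.mp hV with ⟨g, rfl⟩
  refine fo_iff_pos.mpr ⟨(f.comp ⟨Prod.fst, continuous_fst⟩) ⊓ (g.comp ⟨Prod.snd, continuous_snd⟩), ?_⟩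
  ext ⟨x, y⟩
  simp only [mem_prod, mem_setOf_eq, ContinuousMap.inf_apply, ContinuousMap.comp_apply,
    ContinuousMap.coe_mk, lt_inf_iff]

theorem fo_lt_const {f : C(X, ℝ)} {c : ℝ} : FunctionallyOpen {x | f x < c} := by
  have := fo_pos (ContinuousMap.const X c - f)
  refine fo_congr this ?_
  ext x; simp [sub_pos]

theorem fo_const_lt {f : C(X, ℝ)} {c : ℝ} : FunctionallyOpen {x | c < f x} := by
  have := fo_pos (f - ContinuousMap.const X c)
  refine fo_congr this ?_
  ext x; simp [sub_pos]






theorem cc_clusterPt (hX : CountablyCompact X) (u : ℕ → X) :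
    ∃ x : X, MapClusterPt x atTop u := by
  have key : ∃ x : X, ∀ n, x ∈ closure (u '' Ici n) := by
    by_contra hc
    push_neg at hc
    have hcov : (⋃ n, (closure (u '' Ici n))ᶜ) = univ := by
      ext x
      simp only [mem_iUnion, mem_compl_iff, mem_univ, iff_true]
      exact hc x
    obtain ⟨t, ht⟩ := hX _ (fun n => (isClosed_closure).isOpen_compl) hcov
    set N := t.sup id with hN
    have hu : u N ∈ ⋃ n ∈ t, (closure (u '' Ici n))ᶜ := ht ▸ mem_univ _
    simp only [mem_iUnion, mem_compl_iff] at hu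
    obtain ⟨n, hnt, hn⟩ := hu
    exact hn (subset_closure ⟨N, Finset.le_sup (f := id) hnt, rfl⟩)
  obtain ⟨x, hx⟩ := key
  refine ⟨x, mapClusterPt_iff_frequently.mpr fun s hs => ?_⟩
  rw [frequently_atTop]
  intro n
  have := (mem_closure_iff_nhds.mp (hx n)) s hs
  obtain ⟨y, hy1, m, hm, rfl⟩ := this
  exact ⟨m, hm, hy1⟩

theorem cc_seqCpt (hX : CountablyCompact X)
    (hfc : ∀ x : X, (𝓝 x).IsCountablyGenerated) : SeqCpt X := by
  haveI : FirstCountableTopology X := ⟨hfc⟩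
  intro u
  obtain ⟨x, hx⟩ := cc_clusterPt hX u
  obtain ⟨ψ, hψ, h⟩ := TopologicalSpace.FirstCountableTopology.tendsto_subseq hx
  exact ⟨x, ψ, hψ, h⟩

theorem SeqCpt.prod (hX : SeqCpt X) (hY : SeqCpt Y) : SeqCpt (X × Y) := by
  intro u
  obtain ⟨x, φ, hφ, hx⟩ := hX fun n => (u n).1
  obtain ⟨y, ψ, hψ, hy⟩ := hY fun n => (u (φ n)).2
  refine ⟨(x, y), φ ∘ ψ, hφ.comp hψ, ?_⟩
  have h1 : Tendsto (fun n => (u (φ (ψ n))).1) atTop (𝓝 x) := hx.comp hψ.tendsto_atTop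
  have h2 : Tendsto (fun n => (u (φ (ψ n))).2) atTop (𝓝 y) := hy
  simpa [Function.comp_def] using h1.prodMk_nhds h2

theorem SeqCpt.pos_lb (hX : SeqCpt X) (g : C(X, ℝ)) (hg : ∀ x, 0 < g x) :
    ∃ δ : ℝ, 0 < δ ∧ ∀ x, δ ≤ g x := by
  by_contra hc
  push_neg at hc
  have hsel : ∀ n : ℕ, ∃ x : X, g x < 1 / (n + 1) := by
    intro n
    obtain ⟨x, hx⟩ := hc (1 / (n + 1)) (by positivity)
    exact ⟨x, hx⟩
  choose v hv using hsel
  obtain ⟨x, φ, hφ, hx⟩ := hX v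
  have h1 : Tendsto (fun n => g (v (φ n))) atTop (𝓝 (g x)) :=
    (g.continuous.tendsto x).comp hx
  have h2 : g x ≤ 0 := by
    have hle : ∀ n, g (v (φ n)) ≤ 1 / (n + 1 : ℝ) := by
      intro n
      have := hv (φ n)
      have hmono : (n : ℝ) + 1 ≤ (φ n : ℝ) + 1 := by
        have h3 : n ≤ φ n := hφ.le_apply
        have : (n : ℝ) ≤ (φ n : ℝ) := Nat.cast_le.mpr h3
        linarith
      calc g (v (φ n)) ≤ 1 / ((φ n : ℝ) + 1) := (hv (φ n)).le
        _ ≤ 1 / ((n : ℝ) + 1) := by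
            apply one_div_le_one_div_of_le (by positivity) hmono
    have hz : Tendsto (fun n : ℕ => 1 / ((n : ℝ) + 1)) atTop (𝓝 0) :=
      tendsto_one_div_add_atTop_nhds_zero_nat
    exact le_of_tendsto_of_tendsto h1 hz (Eventually.of_forall hle)
  exact absurd (hg x) (not_lt.mpr h2)

theorem manifold_firstCountable {n : ℕ} (hM : IsTopManifold X n) (x : X) :
    (𝓝 x).IsCountablyGenerated := by
  obtain ⟨U, hUo, hxU, ⟨e⟩⟩ := hM x
  haveI : FirstCountableTopology U := e.isEmbedding.firstCountableTopology
  have hmap : Filter.map (Subtype.val : U → X) (𝓝 ⟨x, hxU⟩) = 𝓝 x :=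
    hUo.isOpenEmbedding_subtypeVal.map_nhds_eq ⟨x, hxU⟩
  rw [← hmap]
  infer_instance






/-- Greedy construction: given a "separated point" oracle, get a separated sequence. -/
theorem greedy {α : Type*} [DecidableEq α] (g : Finset α → α) :
    ∃ y : ℕ → α, ∀ n, y n = g (Finset.image y (Finset.range n)) := by
  let Fs : ℕ → Finset α := fun n => Nat.rec ∅ (fun _ F => insert (g F) F) n
  have hFs : ∀ n, Fs (n + 1) = insert (g (Fs n)) (Fs n) := fun _ => rfl
  have key : ∀ n, Fs n = Finset.image (fun k => g (Fs k)) (Finset.range n) := by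
    intro n
    induction n with
    | zero => rfl
    | succ n ih =>
      rw [hFs, Finset.range_add_one, Finset.image_insert, ih]
  exact ⟨fun n => g (Fs n), fun n => by simp only; rw [key n]⟩

/-- Total boundedness of continuous images of sequentially compact spaces. -/
theorem tb_net {E : Type*} [PseudoMetricSpace E] (hX : SeqCpt X) {u : X → E}
    (hu : Continuous u) {ε : ℝ} (hε : 0 < ε) :
    ∃ F : Finset X, ∀ x : X, ∃ c ∈ F, dist (u x) (u c) < ε := by
  classical
  by_contra hc
  push_neg at hc
  have hne : Nonempty X := by
    obtain ⟨x, -⟩ := hc ∅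
    exact ⟨x⟩
  choose g hg using hc
  obtain ⟨y, hy⟩ := greedy g
  have hsep : ∀ m n, m < n → ε ≤ dist (u (y n)) (u (y m)) := by
    intro m n hmn
    have := hg (Finset.image y (Finset.range n)) (y m)
      (Finset.mem_image_of_mem y (Finset.mem_range.mpr hmn))
    rwa [← hy n] at this
  obtain ⟨x, φ, hφ, hconv⟩ := hX y
  have hcauchy : CauchySeq (u ∘ y ∘ φ) := ((hu.tendsto x).comp hconv).cauchySeq
  rw [Metric.cauchySeq_iff] at hcauchy
  obtain ⟨N, hN⟩ := hcauchy ε hε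
  have h2 := hN (N + 1) (by omega) N (le_refl N)
  simp only [Function.comp_apply] at h2
  exact absurd h2 (not_lt.mpr (hsep (φ N) (φ (N + 1)) (hφ (by omega))))

/-- Glicksberg-type slice total boundedness via the double-limit argument. -/
theorem slice_net {E : Type*} [PseudoMetricSpace E]
    (hX : SeqCpt X) (hY : SeqCpt Y) (f : C(X × Y, E)) {ε : ℝ} (hε : 0 < ε) :
    ∃ F : Finset Y, ∀ y : Y, ∃ y' ∈ F, ∀ x : X, dist (f (x, y)) (f (x, y')) ≤ ε := by
  classical
  by_contra hc
  push_neg at hc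
  have hne : Nonempty Y := by
    obtain ⟨y, -⟩ := hc ∅
    exact ⟨y⟩
  choose g hg using hc
  obtain ⟨y, hy⟩ := greedy g
  have hsep : ∀ m n, m < n → ∃ x : X, ε < dist (f (x, y n)) (f (x, y m)) := by
    intro m n hmn
    have := hg (Finset.image y (Finset.range n)) (y m)
      (Finset.mem_image_of_mem y (Finset.mem_range.mpr hmn))
    obtain ⟨x, hx⟩ := this
    exact ⟨x, by rwa [← hy n] at hx⟩
  obtain ⟨yl, φ, hφ, hconv⟩ := hY y
  set z : ℕ → Y := y ∘ φ with hz
  have hzconv : Tendsto z atTop (𝓝 yl) := hconv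
  have hzsep : ∀ m n, m < n → ∃ x : X, ε < dist (f (x, z n)) (f (x, z m)) :=
    fun m n hmn => hsep (φ m) (φ n) (hφ hmn)
  -- for each m, produce a point xs m with ε ≤ dist (f (xs m, yl)) (f (xs m, z m))
  have hkey : ∀ m : ℕ, ∃ x : X, ε ≤ dist (f (x, yl)) (f (x, z m)) := by
    intro m
    have hex : ∀ k : ℕ, ∃ x : X, ε < dist (f (x, z (m + 1 + k))) (f (x, z m)) :=
      fun k => hzsep m (m + 1 + k) (by omega)
    choose w hw using hex
    obtain ⟨xstar, ψ, hψ, hwconv⟩ := hX w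
    refine ⟨xstar, ?_⟩
    have hzt : Tendsto (fun k => z (m + 1 + ψ k)) atTop (𝓝 yl) := by
      apply hzconv.comp
      exact tendsto_atTop_mono (fun k => by omega : ∀ k, ψ k ≤ m + 1 + ψ k)
        hψ.tendsto_atTop
    have h1 : Tendsto (fun k => f (w (ψ k), z (m + 1 + ψ k))) atTop (𝓝 (f (xstar, yl))) :=
      (f.continuous.tendsto _).comp (hwconv.prodMk_nhds hzt)
    have h2 : Tendsto (fun k => f (w (ψ k), z m)) atTop (𝓝 (f (xstar, z m))) :=
      (f.continuous.tendsto _).comp (hwconv.prodMk_nhds tendsto_const_nhds)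
    have hdist : Tendsto (fun k => dist (f (w (ψ k), z (m + 1 + ψ k))) (f (w (ψ k), z m)))
        atTop (𝓝 (dist (f (xstar, yl)) (f (xstar, z m)))) := h1.dist h2
    exact ge_of_tendsto hdist (Eventually.of_forall fun k => (hw (ψ k)).le)
  choose xs hxs using hkey
  obtain ⟨xstarr, ρ, hρ, hxsconv⟩ := hX xs
  have h1 : Tendsto (fun j => f (xs (ρ j), yl)) atTop (𝓝 (f (xstarr, yl))) :=
    (f.continuous.tendsto _).comp (hxsconv.prodMk_nhds tendsto_const_nhds)
  have h2 : Tendsto (fun j => f (xs (ρ j), z (ρ j))) atTop (𝓝 (f (xstarr, yl))) :=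
    (f.continuous.tendsto _).comp (hxsconv.prodMk_nhds (hzconv.comp hρ.tendsto_atTop))
  have hdist : Tendsto (fun j => dist (f (xs (ρ j), yl)) (f (xs (ρ j), z (ρ j))))
      atTop (𝓝 0) := by simpa using h1.dist h2
  have : ε ≤ 0 := ge_of_tendsto hdist (Eventually.of_forall fun j => hxs (ρ j))
  linarith







theorem fo_iff_pos_nonneg {U : Set X} :
    FunctionallyOpen U ↔ ∃ h : C(X, ℝ), (∀ x, 0 ≤ h x) ∧ U = {x | 0 < h x} := by
  constructor
  · intro hU
    obtain ⟨h, rfl⟩ := fo_iff_pos.mp hU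
    refine ⟨h ⊔ 0, fun x => le_max_right _ _, ?_⟩
    ext x
    simp only [mem_setOf_eq, ContinuousMap.sup_apply, ContinuousMap.zero_apply,
      lt_max_iff, lt_self_iff_false, or_false]
  · rintro ⟨h, -, rfl⟩
    exact fo_iff_pos.mpr ⟨h, rfl⟩

/-- Rectangular refinement of finite functionally open covers of products of
sequentially compact spaces. -/
theorem rect_refine (hX : SeqCpt X) (hY : SeqCpt Y)
    (𝒢 : Finset (Set (X × Y))) (h𝒢 : ∀ G ∈ 𝒢, FunctionallyOpen G)
    (hcov : ⋃₀ (𝒢 : Set (Set (X × Y))) = univ) :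
    ∃ (N : ℕ) (α : Fin N → C(X, ℝ)) (β : Fin N → C(Y, ℝ)) (δ : ℝ),
      0 < δ ∧
      (∀ s, ∃ G ∈ 𝒢, {x | 0 < α s x} ×ˢ {y | 0 < β s y} ⊆ G) ∧
      (∀ x : X, ∀ y : Y, ∃ s, δ ≤ α s x ∧ δ ≤ β s y) := by
  classical
  rcases Finset.eq_empty_or_nonempty 𝒢 with h𝒢e | h𝒢ne
  · -- empty cover: the space is empty
    subst h𝒢e
    refine ⟨0, Fin.elim0, Fin.elim0, 1, one_pos, fun s => s.elim0, fun x y => ?_⟩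
    exfalso
    have : (x, y) ∈ (univ : Set (X × Y)) := mem_univ _
    rw [← hcov] at this
    simpa using this
  -- choose cozero functions for the members of 𝒢
  have hch : ∀ G : {G // G ∈ 𝒢}, ∃ h : C(X × Y, ℝ), (∀ z, 0 ≤ h z) ∧ (G : Set (X × Y)) = {z | 0 < h z} :=
    fun G => fo_iff_pos_nonneg.mp (h𝒢 G G.2)
  choose γ hγ0 hγ using hch
  set M := 𝒢.card with hM
  have hMpos : 0 < M := Finset.card_pos.mpr h𝒢ne
  -- uniform positivity of the sum
  have hprod : SeqCpt (X × Y) := hX.prod hY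
  obtain ⟨δ₀, hδ₀, hlb⟩ := hprod.pos_lb (∑ G : {G // G ∈ 𝒢}, γ G) (by
    intro z
    have hz : z ∈ ⋃₀ (𝒢 : Set (Set (X × Y))) := hcov ▸ mem_univ z
    obtain ⟨G, hG, hzG⟩ := hz
    rw [Finset.mem_coe] at hG
    have hpos : 0 < γ ⟨G, hG⟩ z := by
      have h1 := hγ ⟨G, hG⟩
      have h2 : G = {z | 0 < (γ ⟨G, hG⟩) z} := h1
      rw [h2] at hzG
      exact hzG
    rw [ContinuousMap.sum_apply]
    exact Finset.sum_pos' (fun i _ => hγ0 i z) ⟨⟨G, hG⟩, Finset.mem_univ _, hpos⟩)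
  -- every point has a γ-value at least c
  set c : ℝ := δ₀ / M with hc
  have hcpos : 0 < c := div_pos hδ₀ (by exact_mod_cast hMpos)
  have hmax : ∀ z : X × Y, ∃ G : {G // G ∈ 𝒢}, c ≤ γ G z := by
    intro z
    by_contra hcon
    push_neg at hcon
    have hcard : (Finset.univ : Finset {G // G ∈ 𝒢}).card = M := by
      simp [hM, Fintype.card_coe]
    have hne : (Finset.univ : Finset {G // G ∈ 𝒢}).Nonempty := by
      obtain ⟨G, hG⟩ := h𝒢ne
      exact ⟨⟨G, hG⟩, Finset.mem_univ _⟩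
    have hsum : (∑ G : {G // G ∈ 𝒢}, γ G) z < ∑ _G : {G // G ∈ 𝒢}, c := by
      rw [ContinuousMap.sum_apply]
      exact Finset.sum_lt_sum_of_nonempty hne fun i _ => hcon i
    have : (∑ _G : {G // G ∈ 𝒢}, c) = M * c := by
      rw [Finset.sum_const, hcard, nsmul_eq_mul]
    rw [this, hc, mul_div_cancel₀ _ (by exact_mod_cast hMpos.ne')] at hsum
    exact absurd (hlb z) (not_le.mpr hsum)
  -- the vector-valued map
  set E := ({G // G ∈ 𝒢} → ℝ)
  have hfE : Continuous (fun z : X × Y => (fun G => γ G z : E)) :=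
    continuous_pi fun G => (γ G).continuous
  set f : C(X × Y, E) := ⟨fun z => fun G => γ G z, hfE⟩ with hf
  set η : ℝ := c / 8 with hη
  have hηpos : 0 < η := by positivity
  -- slice nets on both sides
  obtain ⟨FY, hFY⟩ := slice_net hX hY f hηpos
  obtain ⟨FX, hFX⟩ := slice_net hY hX (f.comp ⟨Prod.swap, continuous_swap⟩) hηpos
  -- the coordinate maps
  set u : X → ({y // y ∈ FY} → E) := fun x => fun yj => f (x, yj) with hu
  set v : Y → ({x // x ∈ FX} → E) := fun y => fun xi => f (xi, y) with hv
  have huc : Continuous u := continuous_pi fun yj =>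
    f.continuous.comp (continuous_id.prodMk continuous_const)
  have hvc : Continuous v := continuous_pi fun xi =>
    f.continuous.comp (continuous_const.prodMk continuous_id)
  obtain ⟨CX, hCX⟩ := tb_net hX huc (half_pos hηpos)
  obtain ⟨CY, hCY⟩ := tb_net hY hvc (half_pos hηpos)
  -- index by pairs of centers
  set Θ : Finset (X × Y) := CX ×ˢ CY with hΘ
  set N := Θ.card with hN
  set e := Θ.equivFin with he
  refine ⟨N, ?_, ?_, η / 2, half_pos hηpos, ?_, ?_⟩
  · exact fun j => ⟨fun x => max 0 (η - dist (u x) (u (e.symm j : X × Y).1)), by fun_prop⟩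
  · exact fun j => ⟨fun y => max 0 (η - dist (v y) (v (e.symm j : X × Y).2)), by fun_prop⟩
  · -- each rectangle is inside a member of the cover
    intro j
    set cx := (e.symm j : X × Y).1
    set cy := (e.symm j : X × Y).2
    obtain ⟨G, hGc⟩ := hmax (cx, cy)
    refine ⟨G, G.2, ?_⟩
    rintro ⟨p, q⟩ ⟨hp, hq⟩
    simp only [mem_setOf_eq, ContinuousMap.coe_mk, lt_max_iff, lt_self_iff_false,
      false_or, sub_pos] at hp hq
    have hp' : dist (u p) (u cx) < η := by linarith [hp]
    have hq' : dist (v q) (v cy) < η := by linarith [hq]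
    -- oscillation estimate
    have osc : dist (f (p, q)) (f (cx, cy)) ≤ 4 * η + 2 * η := by
      obtain ⟨yj, hyjF, hyj⟩ := hFY q
      obtain ⟨xi, hxiF, hxi⟩ := hFX cx
      have e1 : dist (f (p, q)) (f (cx, q)) ≤ 2 * η + η := by
        have d1 : dist (f (p, q)) (f (p, yj)) ≤ η := hyj p
        have d2 : dist (f (p, yj)) (f (cx, yj)) ≤ dist (u p) (u cx) := by
          have := dist_le_pi_dist (u p) (u cx) ⟨yj, hyjF⟩
          simpa [hu] using this
        have d3 : dist (f (cx, yj)) (f (cx, q)) ≤ η := by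
          have := hyj cx
          rw [dist_comm] at this
          exact this
        calc dist (f (p, q)) (f (cx, q)) ≤ dist (f (p, q)) (f (p, yj)) + dist (f (p, yj)) (f (cx, q)) := dist_triangle _ _ _
          _ ≤ dist (f (p, q)) (f (p, yj)) + (dist (f (p, yj)) (f (cx, yj)) + dist (f (cx, yj)) (f (cx, q))) := by
              linarith [dist_triangle (f (p, yj)) (f (cx, yj)) (f (cx, q))]
          _ ≤ η + (dist (u p) (u cx) + η) := by linarith
          _ ≤ 2 * η + η := by linarith [hp'.le]
      have e2 : dist (f (cx, q)) (f (cx, cy)) ≤ 2 * η + η := by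
        have d1 : dist (f (cx, q)) (f (xi, q)) ≤ η := by
          have := hxi q
          simpa [ContinuousMap.comp_apply, ContinuousMap.coe_mk, Prod.swap] using this
        have d2 : dist (f (xi, q)) (f (xi, cy)) ≤ dist (v q) (v cy) := by
          have := dist_le_pi_dist (v q) (v cy) ⟨xi, hxiF⟩
          simpa [hv] using this
        have d3 : dist (f (xi, cy)) (f (cx, cy)) ≤ η := by
          have := hxi cy
          simp only [ContinuousMap.comp_apply, ContinuousMap.coe_mk] at this
          rw [dist_comm] at this
          simpa using this
        calc dist (f (cx, q)) (f (cx, cy)) ≤ dist (f (cx, q)) (f (xi, q)) + dist (f (xi, q)) (f (cx, cy)) := dist_triangle _ _ _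
          _ ≤ dist (f (cx, q)) (f (xi, q)) + (dist (f (xi, q)) (f (xi, cy)) + dist (f (xi, cy)) (f (cx, cy))) := by
              linarith [dist_triangle (f (xi, q)) (f (xi, cy)) (f (cx, cy))]
          _ ≤ η + (dist (v q) (v cy) + η) := by linarith
          _ ≤ 2 * η + η := by linarith [hq'.le]
      calc dist (f (p, q)) (f (cx, cy)) ≤ dist (f (p, q)) (f (cx, q)) + dist (f (cx, q)) (f (cx, cy)) := dist_triangle _ _ _
        _ ≤ 4 * η + 2 * η := by linarith
    -- conclude membership
    have hcoord : dist (γ G (p, q)) (γ G (cx, cy)) ≤ 6 * η := by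
      have := dist_le_pi_dist (f (p, q)) (f (cx, cy)) G
      have h2 : (f (p, q)) G = γ G (p, q) := rfl
      have h3 : (f (cx, cy)) G = γ G (cx, cy) := rfl
      rw [h2, h3] at this
      linarith [osc]
    have : 0 < γ G (p, q) := by
      have habs : |γ G (p, q) - γ G (cx, cy)| ≤ 6 * η := by
        rw [← Real.dist_eq]; exact hcoord
      have := abs_le.mp habs
      have h8 : η = c / 8 := hη
      nlinarith [hGc, this.1]
    have hGset := hγ G
    show (p, q) ∈ (G : Set (X × Y))
    rw [hGset]
    exact this
  · -- the lower-bound covering property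
    intro x y
    obtain ⟨cx, hcxF, hcx⟩ := hCX x
    obtain ⟨cy, hcyF, hcy⟩ := hCY y
    have hmem : (cx, cy) ∈ Θ := Finset.mem_product.mpr ⟨hcxF, hcyF⟩
    refine ⟨e ⟨(cx, cy), hmem⟩, ?_, ?_⟩
    · simp only [ContinuousMap.coe_mk, Equiv.symm_apply_apply]
      have : dist (u x) (u cx) < η / 2 := hcx
      rw [le_max_iff]
      right; linarith
    · simp only [ContinuousMap.coe_mk, Equiv.symm_apply_apply]
      have : dist (v y) (v cy) < η / 2 := hcy
      rw [le_max_iff]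
      right; linarith







/-- The staggered-threshold construction: from a finite functionally open cover of order
at most `o+1` on a sequentially compact space, produce `K` pairwise-disjoint functionally
open refining families such that every point lies in members of at least `K - o` of them. -/
theorem ostrand {Z : Type*} [TopologicalSpace Z] (hZ : SeqCpt Z) (𝒲 : Finset (Set Z))
    (hFO : ∀ W ∈ 𝒲, FunctionallyOpen W) (hcov : ⋃₀ (𝒲 : Set (Set Z)) = univ)
    {o : ℕ} (horder : ∀ z : Z, ∀ 𝒲' ⊆ 𝒲, (∀ W ∈ 𝒲', z ∈ W) → 𝒲'.card ≤ o + 1) (K : ℕ) :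
    ∃ D : Fin K → Finset {W // W ∈ 𝒲} → Set Z,
      (∀ j T, FunctionallyOpen (D j T)) ∧
      (∀ j T (i : {W // W ∈ 𝒲}), i ∈ T → D j T ⊆ (i : Set Z)) ∧
      (∀ j T T', T ≠ T' → D j T ∩ D j T' = ∅) ∧
      (∀ z : Z, ∃ J : Finset (Fin K), K - o ≤ J.card ∧
        ∀ j ∈ J, ∃ T : Finset {W // W ∈ 𝒲}, T.Nonempty ∧ z ∈ D j T) := by
  classical
  rcases Finset.eq_empty_or_nonempty 𝒲 with h𝒲e | h𝒲ne
  · -- empty cover: Z is empty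
    have hZe : ∀ z : Z, False := by
      intro z
      have : z ∈ ⋃₀ (𝒲 : Set (Set Z)) := hcov ▸ mem_univ z
      obtain ⟨W, hW, -⟩ := this
      simp [h𝒲e] at hW
    exact ⟨fun _ _ => ∅, fun _ _ => fo_empty, fun _ _ i _ => empty_subset _,
      fun _ _ _ _ => inter_empty _, fun z => absurd trivial (fun _ => hZe z)⟩
  -- cozero functions for the members
  have hch : ∀ W : {W // W ∈ 𝒲}, ∃ h : C(Z, ℝ), (∀ x, 0 ≤ h x) ∧ (W : Set Z) = {x | 0 < h x} :=
    fun W => fo_iff_pos_nonneg.mp (hFO W W.2)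
  choose ω hω0 hω using hch
  set t := 𝒲.card with ht
  have htpos : 0 < t := Finset.card_pos.mpr h𝒲ne
  obtain ⟨δ₂, hδ₂, hlb⟩ := hZ.pos_lb (∑ W : {W // W ∈ 𝒲}, ω W) (by
    intro z
    have hz : z ∈ ⋃₀ (𝒲 : Set (Set Z)) := hcov ▸ mem_univ z
    obtain ⟨W, hW, hzW⟩ := hz
    rw [Finset.mem_coe] at hW
    have hpos : 0 < ω ⟨W, hW⟩ z := by
      have h2 : W = {x | 0 < (ω ⟨W, hW⟩) x} := hω ⟨W, hW⟩
      rw [h2] at hzW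
      exact hzW
    rw [ContinuousMap.sum_apply]
    exact Finset.sum_pos' (fun i _ => hω0 i z) ⟨⟨W, hW⟩, Finset.mem_univ _, hpos⟩)
  set Δ : ℝ := δ₂ / t with hΔdef
  have hΔpos : 0 < Δ := div_pos hδ₂ (by exact_mod_cast htpos)
  have hmax : ∀ z : Z, ∃ i : {W // W ∈ 𝒲}, Δ ≤ ω i z := by
    intro z
    by_contra hcon
    push_neg at hcon
    have hcard : (Finset.univ : Finset {W // W ∈ 𝒲}).card = t := by
      simp [ht, Fintype.card_coe]
    have hne : (Finset.univ : Finset {W // W ∈ 𝒲}).Nonempty := by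
      obtain ⟨W, hW⟩ := h𝒲ne
      exact ⟨⟨W, hW⟩, Finset.mem_univ _⟩
    have hsum : (∑ W : {W // W ∈ 𝒲}, ω W) z < ∑ _W : {W // W ∈ 𝒲}, Δ := by
      rw [ContinuousMap.sum_apply]
      exact Finset.sum_lt_sum_of_nonempty hne fun i _ => hcon i
    have heq : (∑ _W : {W // W ∈ 𝒲}, Δ) = t * Δ := by
      rw [Finset.sum_const, hcard, nsmul_eq_mul]
    rw [heq, hΔdef, mul_div_cancel₀ _ (by exact_mod_cast htpos.ne')] at hsum
    exact absurd (hlb z) (not_le.mpr hsum)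
  -- staggered thresholds
  have hθdata : ∃ θ : Fin K → ℝ, (∀ j, 0 < θ j) ∧ (∀ j, θ j < Δ) ∧ Function.Injective θ := by
    set cst : ℝ := Δ / (K + 2) with hcst
    have hcstpos : 0 < cst := by positivity
    refine ⟨fun j => cst * (((j : ℕ) : ℝ) + 1), fun j => by positivity, fun j => ?_, ?_⟩
    · show cst * (((j : ℕ) : ℝ) + 1) < Δ
      have h1 : cst * (((j : ℕ) : ℝ) + 1) < cst * ((K : ℝ) + 2) := by
        have h2 : ((j : ℕ) : ℝ) < (K : ℝ) := by exact_mod_cast j.2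
        nlinarith
      have h3 : cst * ((K : ℝ) + 2) = Δ := by
        rw [hcst, div_mul_cancel₀]
        positivity
      linarith
    · intro j j' h
      simp only at h
      have h2 : ((j : ℕ) : ℝ) + 1 = ((j' : ℕ) : ℝ) + 1 := mul_left_cancel₀ hcstpos.ne' h
      have h4 : ((j : ℕ) : ℝ) = ((j' : ℕ) : ℝ) := by linarith
      have h3 : (j : ℕ) = (j' : ℕ) := by exact_mod_cast h4
      exact Fin.ext h3
  obtain ⟨θ, hθpos, hθlt, hθinj⟩ := hθdata
  -- the families
  set D : Fin K → Finset {W // W ∈ 𝒲} → Set Z :=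
    fun j T => {z | (∀ i ∈ T, θ j < ω i z) ∧ (∀ i ∉ T, ω i z < θ j)} with hD
  refine ⟨D, ?_, ?_, ?_, ?_⟩
  · -- functionally open
    intro j T
    have heq : D j T = ⋂ i ∈ (Finset.univ : Finset {W // W ∈ 𝒲}),
        (if i ∈ T then {z | θ j < ω i z} else {z | ω i z < θ j}) := by
      ext z
      simp only [hD, mem_setOf_eq, mem_iInter]
      constructor
      · rintro ⟨h1, h2⟩ i -
        by_cases hi : i ∈ T
        · simpa [hi] using h1 i hi
        · simpa [hi] using h2 i hi
      · intro h
        constructor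
        · intro i hi
          have := h i (Finset.mem_univ i)
          simpa [hi] using this
        · intro i hi
          have := h i (Finset.mem_univ i)
          simpa [hi] using this
    rw [heq]
    apply fo_biInter
    intro i _
    by_cases hi : i ∈ T
    · simpa [hi] using (fo_const_lt (f := ω i) (c := θ j))
    · simpa [hi] using (fo_lt_const (f := ω i) (c := θ j))
  · -- refinement
    rintro j T i hi z hz
    have h1 : θ j < ω i z := hz.1 i hi
    have h2 : (i : Set Z) = {x | 0 < ω i x} := hω i
    rw [h2]
    exact lt_trans (hθpos j) h1
  · -- disjointness
    intro j T T' hne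
    rw [eq_empty_iff_forall_notMem]
    rintro z ⟨hz1, hz2⟩
    rcases em (T ⊆ T') with hsub | hnsub
    · have hT'T : ¬ T' ⊆ T := fun h => hne (Finset.Subset.antisymm hsub h)
      obtain ⟨i, hiT', hiT⟩ := Finset.not_subset.mp hT'T
      have h1 := hz2.1 i hiT'
      have h2 := hz1.2 i hiT
      linarith
    · obtain ⟨i, hiT, hiT'⟩ := Finset.not_subset.mp hnsub
      have h1 := hz1.1 i hiT
      have h2 := hz2.2 i hiT'
      linarith
  · -- coverage multiplicity
    intro z
    obtain ⟨i₀, hi₀⟩ := hmax z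
    set J : Finset (Fin K) := Finset.univ.filter
      (fun j : Fin K => ∀ i : {W // W ∈ 𝒲}, ω i z ≠ θ j) with hJ
    have hi₀pos : 0 < ω i₀ z := lt_of_lt_of_le hΔpos hi₀
    refine ⟨J, ?_, ?_⟩
    · -- |J| ≥ K - o
      set p : Fin K → Prop := fun j => ∀ i : {W // W ∈ 𝒲}, ω i z ≠ θ j with hp
      set bad := Finset.univ.filter (fun j : Fin K => ¬ p j) with hbad
      have hsplit : J.card + bad.card = K := by
        have := Finset.card_filter_add_card_filter_not
          (s := (Finset.univ : Finset (Fin K))) (p := p)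
        simpa [hJ, hbad, hp] using this
      -- the positive indices
      set P : Finset {W // W ∈ 𝒲} := Finset.univ.filter (fun i => 0 < ω i z) with hP
      have hPcard : P.card ≤ o + 1 := by
        have hmap : (P.image Subtype.val).card = P.card :=
          Finset.card_image_of_injective P Subtype.val_injective
        have hsub : P.image Subtype.val ⊆ 𝒲 := by
          intro W hW
          rw [Finset.mem_image] at hW
          obtain ⟨i, -, rfl⟩ := hW
          exact i.2
        have hmem : ∀ W ∈ P.image Subtype.val, z ∈ W := by
          intro W hW
          rw [Finset.mem_image] at hW
          obtain ⟨i, hiP, rfl⟩ := hW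
          rw [hP, Finset.mem_filter] at hiP
          have h2 : (i : Set Z) = {x | 0 < ω i x} := hω i
          rw [h2]
          exact hiP.2
        rw [← hmap]
        exact horder z _ hsub hmem
      have hi₀P : i₀ ∈ P := by
        rw [hP, Finset.mem_filter]
        exact ⟨Finset.mem_univ _, hi₀pos⟩
      -- inject bad into P.erase i₀
      set wfun : Fin K → {W // W ∈ 𝒲} := fun j =>
        if h : ∃ i : {W // W ∈ 𝒲}, ω i z = θ j then Classical.choose h else i₀ with hwfun
      have hwspec : ∀ j ∈ bad, ω (wfun j) z = θ j := by
        intro j hj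
        rw [hbad, Finset.mem_filter, hp] at hj
        have h2 := hj.2
        obtain ⟨i, hi⟩ := not_forall.mp h2
        have hex : ∃ i : {W // W ∈ 𝒲}, ω i z = θ j := ⟨i, not_not.mp hi⟩
        rw [hwfun]
        simp only [dif_pos hex]
        exact Classical.choose_spec hex
      have hbadcard : bad.card ≤ (P.erase i₀).card := by
        apply Finset.card_le_card_of_injOn wfun
        · intro j hj
          rw [Finset.mem_coe, Finset.mem_erase]
          constructor
          · intro he
            have h1 := hwspec j hj
            rw [he] at h1
            have := hθlt j
            linarith [hi₀]
          · rw [hP, Finset.mem_filter]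
            refine ⟨Finset.mem_univ _, ?_⟩
            rw [hwspec j hj]
            exact hθpos j
        · intro j hj j' hj' heq
          apply hθinj
          rw [← hwspec j hj, ← hwspec j' hj', heq]
      have herase : (P.erase i₀).card = P.card - 1 := Finset.card_erase_of_mem hi₀P
      have : bad.card ≤ o := by omega
      omega
    · intro j hj
      rw [hJ, Finset.mem_filter] at hj
      set T : Finset {W // W ∈ 𝒲} := Finset.univ.filter (fun i => θ j < ω i z) with hT
      have hi₀T : i₀ ∈ T := by
        rw [hT, Finset.mem_filter]
        exact ⟨Finset.mem_univ _, lt_of_lt_of_le (hθlt j) hi₀⟩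
      refine ⟨T, ⟨i₀, hi₀T⟩, ?_, ?_⟩
      · intro i hi
        rw [hT, Finset.mem_filter] at hi
        exact hi.2
      · intro i hi
        rw [hT, Finset.mem_filter] at hi
        push_neg at hi
        have h1 : ω i z ≤ θ j := hi (Finset.mem_univ i)
        exact lt_of_le_of_ne h1 (hj.2 i)







/-- On one factor: refine the threshold cover generated by the rectangle data. -/
theorem side_families {Z : Type uz} [TopologicalSpace Z] (hZ : SeqCpt Z) {a : ℕ}
    (ha : CovDimLE Z a) {N : ℕ} (α : Fin N → C(Z, ℝ)) {δ : ℝ} (hδ : 0 < δ) (K : ℕ) :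
    ∃ (ι : Type uz) (_ : Fintype ι) (D : Fin K → Finset ι → Set Z),
      (∀ j T, FunctionallyOpen (D j T)) ∧
      (∀ j T T', T ≠ T' → D j T ∩ D j T' = ∅) ∧
      (∀ j (T : Finset ι), T.Nonempty → ∀ z ∈ D j T, ∀ s : Fin N, δ ≤ α s z →
        D j T ⊆ {x | 0 < α s x}) ∧
      (∀ z : Z, ∃ J : Finset (Fin K), K - a ≤ J.card ∧
        ∀ j ∈ J, ∃ T : Finset ι, T.Nonempty ∧ z ∈ D j T) := by
  classical
  -- the threshold cover
  set C : Finset (Fin N) → Set Z :=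
    fun σ => {x | (∀ s ∈ σ, 0 < α s x) ∧ (∀ s ∉ σ, α s x < δ)} with hC
  have hCfo : ∀ σ, FunctionallyOpen (C σ) := by
    intro σ
    have heq : C σ = ⋂ s ∈ (Finset.univ : Finset (Fin N)),
        (if s ∈ σ then {x | 0 < α s x} else {x | α s x < δ}) := by
      ext z
      simp only [hC, mem_setOf_eq, mem_iInter]
      constructor
      · rintro ⟨h1, h2⟩ s -
        by_cases hs : s ∈ σ
        · simpa [hs] using h1 s hs
        · simpa [hs] using h2 s hs
      · intro h
        constructor
        · intro s hs
          simpa [hs] using h s (Finset.mem_univ s)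
        · intro s hs
          simpa [hs] using h s (Finset.mem_univ s)
    rw [heq]
    apply fo_biInter
    intro s _
    by_cases hs : s ∈ σ
    · simpa [hs] using fo_pos (α s)
    · simpa [hs] using (fo_lt_const (f := α s) (c := δ))
  set 𝒞 : Finset (Set Z) := Finset.image C Finset.univ with h𝒞
  have h𝒞fo : ∀ U ∈ 𝒞, FunctionallyOpen U := by
    intro U hU
    rw [h𝒞, Finset.mem_image] at hU
    obtain ⟨σ, -, rfl⟩ := hU
    exact hCfo σ
  have h𝒞cov : ⋃₀ (𝒞 : Set (Set Z)) = univ := by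
    apply eq_univ_of_forall
    intro z
    refine ⟨C (Finset.univ.filter (fun s => δ ≤ α s z)), ?_, ?_, ?_⟩
    · rw [h𝒞]
      exact Finset.mem_coe.mpr (Finset.mem_image_of_mem _ (Finset.mem_univ _))
    · intro s hs
      rw [Finset.mem_filter] at hs
      exact lt_of_lt_of_le hδ hs.2
    · intro s hs
      rw [Finset.mem_filter] at hs
      push_neg at hs
      exact hs (Finset.mem_univ s)
  -- refine it using the dimension hypothesis
  obtain ⟨𝒱, h𝒱fo, h𝒱cov, h𝒱ref, h𝒱ord⟩ := ha 𝒞 h𝒞fo h𝒞cov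
  -- pointwise order bound
  have horder : ∀ z : Z, ∀ 𝒲' ⊆ 𝒱, (∀ W ∈ 𝒲', z ∈ W) → 𝒲'.card ≤ a + 1 := by
    intro z 𝒲' hsub hmem
    by_contra hgt
    push_neg at hgt
    have := h𝒱ord 𝒲' hsub hgt
    have hz : z ∈ ⋂₀ (𝒲' : Set (Set Z)) := by
      rw [mem_sInter]
      intro W hW
      exact hmem W (Finset.mem_coe.mp hW)
    rw [this] at hz
    exact hz
  obtain ⟨D, hDfo, hDsub, hDdisj, hDcov⟩ := ostrand hZ 𝒱 h𝒱fo h𝒱cov horder K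
  refine ⟨{W // W ∈ 𝒱}, inferInstance, D, hDfo, hDdisj, ?_, hDcov⟩
  -- key separation property
  intro j T hT z hzD s hs
  obtain ⟨i, hiT⟩ := hT
  have hsubW : D j T ⊆ (i : Set Z) := hDsub j T i hiT
  obtain ⟨U, hU𝒞, hWU⟩ := h𝒱ref (i : Set Z) i.2
  rw [h𝒞, Finset.mem_image] at hU𝒞
  obtain ⟨σ, -, rfl⟩ := hU𝒞
  have hzC : z ∈ C σ := hWU (hsubW hzD)
  have hsσ : s ∈ σ := by
    by_contra hns
    have := hzC.2 s hns
    linarith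
  intro w hw
  have hwC : w ∈ C σ := hWU (hsubW hw)
  exact hwC.1 s hsσ

/-- The product theorem for `CovDimLE` on sequentially compact factors. -/
theorem covDimLE_prod (hX : SeqCpt X) (hY : SeqCpt Y) {a b : ℕ}
    (ha : CovDimLE X a) (hb : CovDimLE Y b) : CovDimLE (X × Y) (a + b) := by
  classical
  intro 𝒢 h𝒢 hcov
  obtain ⟨N, α, β, δ, hδ, hrect, hpt⟩ := rect_refine hX hY 𝒢 h𝒢 hcov
  set K := a + b + 1 with hK
  obtain ⟨ιX, hιXf, DX, hDXfo, hDXdisj, hDXkey, hDXcov⟩ := side_families hX ha α hδ K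
  obtain ⟨ιY, hιYf, DY, hDYfo, hDYdisj, hDYkey, hDYcov⟩ := side_families hY hb β hδ K
  -- the candidate triples
  set good : Fin K × Finset ιX × Finset ιY → Prop := fun p =>
    p.2.1.Nonempty ∧ p.2.2.Nonempty ∧
      ∃ s : Fin N, (DX p.1 p.2.1 ⊆ {x | 0 < α s x}) ∧ (DY p.1 p.2.2 ⊆ {y | 0 < β s y})
    with hgood
  set 𝒱 : Finset (Set (X × Y)) :=
    Finset.image (fun p : Fin K × Finset ιX × Finset ιY => DX p.1 p.2.1 ×ˢ DY p.1 p.2.2)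
      (Finset.univ.filter good) with h𝒱
  refine ⟨𝒱, ?_, ?_, ?_, ?_⟩
  · -- functionally open
    intro V hV
    rw [h𝒱, Finset.mem_image] at hV
    obtain ⟨p, -, rfl⟩ := hV
    exact fo_prod (hDXfo _ _) (hDYfo _ _)
  · -- covering
    apply eq_univ_of_forall
    rintro ⟨x, y⟩
    obtain ⟨JX, hJXcard, hJX⟩ := hDXcov x
    obtain ⟨JY, hJYcard, hJY⟩ := hDYcov y
    have hKa : K - a = b + 1 := by omega
    have hKb : K - b = a + 1 := by omega
    have hJint : (JX ∩ JY).Nonempty := by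
      rw [← Finset.card_pos]
      have hcup : (JX ∪ JY).card ≤ K := by
        have := Finset.card_le_univ (JX ∪ JY)
        simpa [Finset.card_univ] using this
      have := Finset.card_union_add_card_inter JX JY
      omega
    obtain ⟨j, hj⟩ := hJint
    rw [Finset.mem_inter] at hj
    obtain ⟨TX, hTXne, hxT⟩ := hJX j hj.1
    obtain ⟨TY, hTYne, hyT⟩ := hJY j hj.2
    obtain ⟨s, hsx, hsy⟩ := hpt x y
    have hXsub : DX j TX ⊆ {x' | 0 < α s x'} := hDXkey j TX hTXne x hxT s hsx
    have hYsub : DY j TY ⊆ {y' | 0 < β s y'} := hDYkey j TY hTYne y hyT s hsy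
    refine ⟨DX j TX ×ˢ DY j TY, ?_, hxT, hyT⟩
    rw [h𝒱, Finset.mem_coe, Finset.mem_image]
    exact ⟨(j, TX, TY), Finset.mem_filter.mpr ⟨Finset.mem_univ _,
      hTXne, hTYne, s, hXsub, hYsub⟩, rfl⟩
  · -- refinement
    intro V hV
    rw [h𝒱, Finset.mem_image] at hV
    obtain ⟨p, hp, rfl⟩ := hV
    rw [Finset.mem_filter] at hp
    obtain ⟨-, -, -, s, hXs, hYs⟩ := hp
    obtain ⟨G, hG, hGsub⟩ := hrect s
    exact ⟨G, hG, subset_trans (Set.prod_mono hXs hYs) hGsub⟩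
  · -- order
    intro 𝒲 h𝒲sub hcard
    by_contra hne
    rw [← Ne, ← nonempty_iff_ne_empty] at hne
    obtain ⟨z, hz⟩ := hne
    rw [mem_sInter] at hz
    -- representation choice
    have hrep : ∀ P ∈ 𝒲, ∃ p : Fin K × Finset ιX × Finset ιY,
        DX p.1 p.2.1 ×ˢ DY p.1 p.2.2 = P := by
      intro P hP
      have := h𝒲sub hP
      rw [h𝒱, Finset.mem_image] at this
      obtain ⟨p, -, hpeq⟩ := this
      exact ⟨p, hpeq⟩
    haveI : Inhabited (Fin K) := ⟨⟨0, by omega⟩⟩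
    set pick : Set (X × Y) → Fin K × Finset ιX × Finset ιY := fun P =>
      if h : ∃ p : Fin K × Finset ιX × Finset ιY, DX p.1 p.2.1 ×ˢ DY p.1 p.2.2 = P
      then Classical.choose h else default with hpick
    have hpickspec : ∀ P ∈ 𝒲, DX (pick P).1 (pick P).2.1 ×ˢ DY (pick P).1 (pick P).2.2 = P := by
      intro P hP
      have hex := hrep P hP
      rw [hpick]
      simp only [dif_pos hex]
      exact Classical.choose_spec hex
    have hinj : Set.InjOn (fun P => (pick P).1) 𝒲 := by
      intro P hP P' hP' heq
      simp only at heq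
      have e1 := hpickspec P hP
      have e2 := hpickspec P' hP'
      have hzP : z ∈ P := hz P (Finset.mem_coe.mpr hP)
      have hzP' : z ∈ P' := hz P' (Finset.mem_coe.mpr hP')
      rw [← e1] at hzP
      rw [← e2] at hzP'
      obtain ⟨hzx, hzy⟩ := hzP
      obtain ⟨hzx', hzy'⟩ := hzP'
      have hTeq : (pick P).2.1 = (pick P').2.1 := by
        by_contra hTne
        have hdd := hDXdisj (pick P).1 (pick P).2.1 (pick P').2.1 hTne
        rw [← heq] at hzx'
        have hmem : z.1 ∈ DX (pick P).1 (pick P).2.1 ∩ DX (pick P).1 (pick P').2.1 :=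
          ⟨hzx, hzx'⟩
        rw [hdd] at hmem
        exact hmem
      have hSeq : (pick P).2.2 = (pick P').2.2 := by
        by_contra hSne
        have hdd := hDYdisj (pick P).1 (pick P).2.2 (pick P').2.2 hSne
        rw [← heq] at hzy'
        have hmem : z.2 ∈ DY (pick P).1 (pick P).2.2 ∩ DY (pick P).1 (pick P').2.2 :=
          ⟨hzy, hzy'⟩
        rw [hdd] at hmem
        exact hmem
      rw [← e1, ← e2, heq, hTeq, hSeq]
    have hle : 𝒲.card ≤ K := by
      have := Finset.card_le_card_of_injOn (fun P => (pick P).1)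
        (fun P _ => Finset.mem_univ ((pick P).1)) hinj
      simpa [Finset.card_univ] using this
    omega


end CovDimProof
/-- For countably compact normal manifolds, `dim (M₁ × M₂) ≤ dim M₁ + dim M₂`. -/
theorem covDim_prod_manifolds_le (M₁ : Type u) (M₂ : Type u)
    [TopologicalSpace M₁] [TopologicalSpace M₂] [NormalSpace M₁] [NormalSpace M₂]
    [T35Space M₁] [T35Space M₂]
    (hM₁ : ∃ n, IsTopManifold M₁ n) (hM₂ : ∃ n, IsTopManifold M₂ n)
    (h₁ : CountablyCompact M₁) (h₂ : CountablyCompact M₂) :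
    covDim (M₁ × M₂) ≤ covDim M₁ + covDim M₂ := by
  classical
  rcases eq_or_ne (covDim M₁) ⊤ with h1 | h1
  · rw [h1, top_add]; exact le_top
  rcases eq_or_ne (covDim M₂) ⊤ with h2 | h2
  · rw [h2, add_top]; exact le_top
  have hS1 : {n : ℕ | CovDimLE M₁ n}.Nonempty := by
    by_contra h
    rw [Set.not_nonempty_iff_eq_empty] at h
    apply h1
    unfold covDim
    rw [h]
    simp
  have hS2 : {n : ℕ | CovDimLE M₂ n}.Nonempty := by
    by_contra h
    rw [Set.not_nonempty_iff_eq_empty] at h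
    apply h2
    unfold covDim
    rw [h]
    simp
  set a := sInf {n : ℕ | CovDimLE M₁ n} with hadef
  set b := sInf {n : ℕ | CovDimLE M₂ n} with hbdef
  have haC : CovDimLE M₁ a := Nat.sInf_mem hS1
  have hbC : CovDimLE M₂ b := Nat.sInf_mem hS2
  -- sequential compactness of the factors
  obtain ⟨n₁, hn₁⟩ := hM₁
  obtain ⟨n₂, hn₂⟩ := hM₂
  have hseq₁ : CovDimProof.SeqCpt M₁ :=
    CovDimProof.cc_seqCpt h₁ (fun x => CovDimProof.manifold_firstCountable hn₁ x)
  have hseq₂ : CovDimProof.SeqCpt M₂ :=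
    CovDimProof.cc_seqCpt h₂ (fun x => CovDimProof.manifold_firstCountable hn₂ x)
  have hprod : CovDimLE (M₁ × M₂) (a + b) :=
    CovDimProof.covDimLE_prod hseq₁ hseq₂ haC hbC
  have hle1 : covDim (M₁ × M₂) ≤ ((a + b : ℕ) : ℕ∞) := by
    apply sInf_le
    exact ⟨a + b, hprod, rfl⟩
  have hle2 : ((a : ℕ) : ℕ∞) ≤ covDim M₁ := by
    apply le_sInf
    rintro y ⟨n, hn, rfl⟩
    exact_mod_cast Nat.cast_le.mpr (Nat.sInf_le hn)
  have hle3 : ((b : ℕ) : ℕ∞) ≤ covDim M₂ := by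
    apply le_sInf
    rintro y ⟨n, hn, rfl⟩
    exact_mod_cast Nat.cast_le.mpr (Nat.sInf_le hn)
  calc covDim (M₁ × M₂) ≤ ((a + b : ℕ) : ℕ∞) := hle1
    _ = ((a : ℕ) : ℕ∞) + ((b : ℕ) : ℕ∞) := by push_cast; rfl
    _ ≤ covDim M₁ + covDim M₂ := add_le_add hle2 hle3
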